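/- For the Franel polynomial g_n(x) = Σ_{k=0}^n C(n,k)^3 x^k, the variance σ_n^2 = g_n''(1)/g_n(1) + μ_n − μ_n^2, with μ_n = g_n'(1)/g_n(1) = n/2, satisfies lim_{n→∞} σ_n^2 / n = 1/12. -/

import Mathlib

open Finset

noncomputable def fr (n : ℕ) : ℝ := ∑ k ∈ range (n+1), ((n.choose k : ℕ) : ℝ)^3

lemma fr_pos (n : ℕ) : 0 < fr n := by
  have h0 : (0:ℝ) < ((n.choose 0 : ℕ) : ℝ)^3 := by simp
  refine Finset.sum_pos' (fun k _ => by positivity) ⟨0, by simp, h0⟩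

lemma S1_eq (n : ℕ) :
    ∑ k ∈ range (n+1), (k : ℝ) * ((n.choose k : ℕ) : ℝ)^3 = (n : ℝ)/2 * fr n := by
  have hrefl := Finset.sum_range_reflect
    (fun k => (k : ℝ) * ((n.choose k : ℕ) : ℝ)^3) (n+1)
  -- hrefl : ∑ j ∈ range (n+1), f (n - j) = ∑ j ∈ range (n+1), f j
  have h2 : ∑ j ∈ range (n+1), (((n - j : ℕ) : ℝ) * ((n.choose (n - j) : ℕ) : ℝ)^3)
      = ∑ j ∈ range (n+1), (((n:ℝ) - j) * ((n.choose j : ℕ) : ℝ)^3) := by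
    refine Finset.sum_congr rfl (fun j hj => ?_)
    have hj' : j ≤ n := Nat.lt_succ_iff.mp (Finset.mem_range.mp hj)
    rw [Nat.choose_symm hj', Nat.cast_sub hj']
  simp only [Nat.add_sub_cancel] at hrefl
  rw [h2] at hrefl
  have : ∑ j ∈ range (n+1), (((n:ℝ) - j) * ((n.choose j : ℕ) : ℝ)^3)
      = (n:ℝ) * fr n - ∑ j ∈ range (n+1), (j : ℝ) * ((n.choose j : ℕ) : ℝ)^3 := by
    rw [fr, Finset.mul_sum, ← Finset.sum_sub_distrib]
    exact Finset.sum_congr rfl (fun j _ => by ring)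
  rw [this] at hrefl
  linarith

lemma S3_eq (m : ℕ) :
    ∑ k ∈ range (m+2), (k : ℝ)^3 * (((m+1).choose k : ℕ) : ℝ)^3
      = ((m:ℝ)+1)^3 * fr m := by
  rw [Finset.sum_range_succ']
  simp only [Nat.cast_zero]
  have : ∑ i ∈ range (m+1), ((i:ℝ)+1)^3 * (((m+1).choose (i+1) : ℕ) : ℝ)^3
      = ∑ i ∈ range (m+1), ((m:ℝ)+1)^3 * ((m.choose i : ℕ) : ℝ)^3 := by
    refine Finset.sum_congr rfl (fun i _ => ?_)
    have h := Nat.add_one_mul_choose_eq m i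
    have h' : ((m+1 : ℕ) : ℝ) * ((m.choose i : ℕ) : ℝ)
        = (((m+1).choose (i+1) : ℕ) : ℝ) * ((i+1 : ℕ) : ℝ) := by
      rw [← Nat.cast_mul, ← Nat.cast_mul]
      exact_mod_cast congrArg (Nat.cast (R := ℝ)) h
    push_cast at h'
    have h3 := congrArg (fun x : ℝ => x^3) h'
    simp only [mul_pow] at h3
    push_cast
    linarith
  push_cast
  rw [this, ← Finset.mul_sum, fr]
  push_cast
  ring


lemma S2_eq (m : ℕ) :
    ∑ k ∈ range (m+2), (k : ℝ)^2 * (((m+1).choose k : ℕ) : ℝ)^3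
      = 2/3 * ((m:ℝ)+1)^2 * fr m + 1/6 * ((m:ℝ)+1)^2 * fr (m+1) := by
  set n : ℕ := m + 1 with hn
  have hrefl := Finset.sum_range_reflect
    (fun k => (k : ℝ)^3 * ((n.choose k : ℕ) : ℝ)^3) (n+1)
  simp only [Nat.add_sub_cancel] at hrefl
  have h2 : ∑ j ∈ range (n+1), (((n - j : ℕ) : ℝ)^3 * ((n.choose (n - j) : ℕ) : ℝ)^3)
      = ∑ j ∈ range (n+1), (((n:ℝ) - j)^3 * ((n.choose j : ℕ) : ℝ)^3) := by
    refine Finset.sum_congr rfl (fun j hj => ?_)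
    have hj' : j ≤ n := Nat.lt_succ_iff.mp (Finset.mem_range.mp hj)
    rw [Nat.choose_symm hj', Nat.cast_sub hj']
  rw [h2] at hrefl
  have hexp : ∑ j ∈ range (n+1), (((n:ℝ) - j)^3 * ((n.choose j : ℕ) : ℝ)^3)
      = (n:ℝ)^3 * fr n
        - 3*(n:ℝ)^2 * (∑ j ∈ range (n+1), (j : ℝ) * ((n.choose j : ℕ) : ℝ)^3)
        + 3*(n:ℝ) * (∑ j ∈ range (n+1), (j : ℝ)^2 * ((n.choose j : ℕ) : ℝ)^3)
        - ∑ j ∈ range (n+1), (j : ℝ)^3 * ((n.choose j : ℕ) : ℝ)^3 := by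
    rw [fr, Finset.mul_sum, Finset.mul_sum, Finset.mul_sum]
    simp only [← Finset.sum_sub_distrib, ← Finset.sum_add_distrib]
    exact Finset.sum_congr rfl (fun j _ => by ring)
  rw [hexp] at hrefl
  have hS1 := S1_eq n
  have hS3 := S3_eq m
  have hncast : ((n:ℕ):ℝ) = (m:ℝ) + 1 := by rw [hn]; push_cast; ring
  rw [hncast] at hrefl hS1
  rw [hn] at hrefl hS1 ⊢
  have hmn : m + 1 + 1 = m + 2 := rfl
  rw [hmn] at hrefl hS1
  rw [hS3] at hrefl
  rw [hS1] at hrefl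
  have hmpos : (0:ℝ) < (m:ℝ) + 1 := by positivity
  nlinarith [hrefl]

noncomputable def QQ (N k : ℝ) : ℝ :=
  4*k^3 - 6*(3*N+2)*k^2 + 3*(9*N^2+13*N+4)*k - (14*N^3+32*N^2+22*N+4)

noncomputable def TT (m : ℕ) : ℕ → ℝ
  | 0 => 0
  | (j+1) => (((m+1).choose j : ℕ) : ℝ)^3 * QQ ((m:ℝ)+1) ((j:ℝ)+1)

lemma cert (m k : ℕ) :
    ((m:ℝ)+1) * ( ((m:ℝ)+2)^2 * (((m+2).choose k : ℕ) : ℝ)^3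
      - (7*(m:ℝ)^2+21*(m:ℝ)+16) * (((m+1).choose k : ℕ) : ℝ)^3
      - 8*((m:ℝ)+1)^2 * ((m.choose k : ℕ) : ℝ)^3 )
    = TT m (k+1) - TT m k := by
  match k with
  | 0 =>
    simp only [TT, QQ, Nat.choose_zero_right]
    push_cast
    ring
  | (j+1) =>
    rcases le_or_gt (j+1) (m+1) with hk | hk
    · -- main case: 1 ≤ k = j+1 ≤ m+1
      have hj : j ≤ m := Nat.lt_succ_iff.mp hk
      set a : ℝ := (((m+2).choose (j+1) : ℕ) : ℝ) with ha
      set b : ℝ := (((m+1).choose (j+1) : ℕ) : ℝ) with hb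
      set d : ℝ := ((m.choose (j+1) : ℕ) : ℝ) with hd
      set e : ℝ := (((m+1).choose j : ℕ) : ℝ) with he
      have hA : ((m:ℝ)+1-(j:ℝ)) * a = ((m:ℝ)+2) * b := by
        have h := Nat.choose_mul_succ_eq (m+1) (j+1)
        -- (m+1).choose (j+1) * (m+2) = (m+2).choose (j+1) * (m+2 - (j+1))
        have hsub : m + 1 + 1 - (j+1) = m + 1 - j := by omega
        rw [hsub] at h
        have hcast : ((m + 1 - j : ℕ) : ℝ) = (m:ℝ) + 1 - (j:ℝ) := by
          rw [Nat.cast_sub (by omega)]; push_cast; ring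
        have := congrArg (Nat.cast (R := ℝ)) h
        push_cast at this
        rw [show ((m:ℝ)+1+1) = (m:ℝ)+2 by ring] at this
        rw [← hcast]
        rw [ha, hb]
        push_cast
        linarith [this]
      have hB : ((m:ℝ)+1) * d = ((m:ℝ)-(j:ℝ)) * b := by
        have h := Nat.choose_mul_succ_eq m (j+1)
        have hsub : m + 1 - (j+1) = m - j := by omega
        rw [hsub] at h
        have hcast : ((m - j : ℕ) : ℝ) = (m:ℝ) - (j:ℝ) := by
          rw [Nat.cast_sub hj]
        have := congrArg (Nat.cast (R := ℝ)) h
        push_cast at this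
        rw [← hcast, hd, hb]
        push_cast
        linarith [this]
      have hC : ((j:ℝ)+1) * b = ((m:ℝ)+1-(j:ℝ)) * e := by
        have h := Nat.choose_succ_right_eq (m+1) j
        have hsub : m + 1 - j = m + 1 - j := rfl
        have hcast : ((m + 1 - j : ℕ) : ℝ) = (m:ℝ) + 1 - (j:ℝ) := by
          rw [Nat.cast_sub (by omega)]; push_cast; ring
        have := congrArg (Nat.cast (R := ℝ)) h
        push_cast at this
        rw [← hcast, hb, he]
        push_cast
        linarith [this]
      have hu : ((m:ℝ)+1-(j:ℝ)) ≠ 0 := by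
        have : (j:ℝ) ≤ (m:ℝ) := by exact_mod_cast hj
        linarith
      have hA3 : (((m:ℝ)+1-(j:ℝ)))^3 * a^3 = (((m:ℝ)+2))^3 * b^3 := by
        have := congrArg (fun x : ℝ => x^3) hA
        simp only [mul_pow] at this; linarith
      have hB3 : (((m:ℝ)+1))^3 * d^3 = (((m:ℝ)-(j:ℝ)))^3 * b^3 := by
        have := congrArg (fun x : ℝ => x^3) hB
        simp only [mul_pow] at this; linarith
      have hC3 : (((j:ℝ)+1))^3 * b^3 = (((m:ℝ)+1-(j:ℝ)))^3 * e^3 := by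
        have := congrArg (fun x : ℝ => x^3) hC
        simp only [mul_pow] at this; linarith
      simp only [TT, QQ]
      push_cast
      apply mul_left_cancel₀ (pow_ne_zero 3 hu)
      linear_combination (((m:ℝ)+1) * (((m:ℝ)+2))^2) * hA3
        - 8 * (((m:ℝ)+1-(j:ℝ)))^3 * hB3
        - (4*((j:ℝ)+1)^3 - 6*(3*((m:ℝ)+1)+2)*((j:ℝ)+1)^2
            + 3*(9*((m:ℝ)+1)^2+13*((m:ℝ)+1)+4)*((j:ℝ)+1)
            - (14*((m:ℝ)+1)^3+32*((m:ℝ)+1)^2+22*((m:ℝ)+1)+4)) * hC3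
    · rcases eq_or_lt_of_le (Nat.succ_le_of_lt hk) with hk2 | hk2
      · -- k = m+2
        have hj : j = m + 1 := by omega
        subst hj
        have h1 : (m+2).choose (m+2) = 1 := Nat.choose_self _
        have h2 : (m+1).choose (m+2) = 0 := Nat.choose_eq_zero_of_lt (by omega)
        have h3 : m.choose (m+2) = 0 := Nat.choose_eq_zero_of_lt (by omega)
        have h4 : (m+1).choose (m+1) = 1 := Nat.choose_self _
        simp only [TT, QQ, h1, h2, h3, h4]
        push_cast
        ring
      · -- k ≥ m+3
        have h1 : (m+2).choose (j+1) = 0 := Nat.choose_eq_zero_of_lt (by omega)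
        have h2 : (m+1).choose (j+1) = 0 := Nat.choose_eq_zero_of_lt (by omega)
        have h3 : m.choose (j+1) = 0 := Nat.choose_eq_zero_of_lt (by omega)
        have h4 : (m+1).choose j = 0 := Nat.choose_eq_zero_of_lt (by omega)
        simp only [TT, QQ, h1, h2, h3, h4]
        push_cast
        ring

lemma franel_rec (m : ℕ) :
    ((m:ℝ)+2)^2 * fr (m+2)
      = (7*(m:ℝ)^2+21*(m:ℝ)+16) * fr (m+1) + 8*((m:ℝ)+1)^2 * fr m := by
  have htel := Finset.sum_range_sub (fun k => TT m k) (m+3)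
  have hsum : ∑ k ∈ range (m+3), (TT m (k+1) - TT m k) = 0 := by
    rw [htel]
    have : TT m (m+3) = 0 := by
      simp only [TT]
      rw [Nat.choose_eq_zero_of_lt (by omega)]
      push_cast
      ring
    rw [this]
    simp [TT]
  have hcert : ∑ k ∈ range (m+3), ((m:ℝ)+1) * ( ((m:ℝ)+2)^2 * (((m+2).choose k : ℕ) : ℝ)^3
      - (7*(m:ℝ)^2+21*(m:ℝ)+16) * (((m+1).choose k : ℕ) : ℝ)^3
      - 8*((m:ℝ)+1)^2 * ((m.choose k : ℕ) : ℝ)^3 ) = 0 := by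
    rw [Finset.sum_congr rfl (fun k _ => cert m k), hsum]
  have hexpand : ∑ k ∈ range (m+3), ( ((m:ℝ)+2)^2 * (((m+2).choose k : ℕ) : ℝ)^3
      - (7*(m:ℝ)^2+21*(m:ℝ)+16) * (((m+1).choose k : ℕ) : ℝ)^3
      - 8*((m:ℝ)+1)^2 * ((m.choose k : ℕ) : ℝ)^3 ) = 0 := by
    have hne : ((m:ℝ)+1) ≠ 0 := by positivity
    rw [← Finset.mul_sum] at hcert
    exact (mul_eq_zero.mp hcert).resolve_left hne
  have h1 : ∑ k ∈ range (m+3), (((m+2).choose k : ℕ) : ℝ)^3 = fr (m+2) := rfl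
  have h2 : ∑ k ∈ range (m+3), (((m+1).choose k : ℕ) : ℝ)^3 = fr (m+1) := by
    rw [Finset.sum_range_succ, Nat.choose_eq_zero_of_lt (by omega)]
    simp [fr]
  have h3 : ∑ k ∈ range (m+3), ((m.choose k : ℕ) : ℝ)^3 = fr m := by
    rw [Finset.sum_range_succ, Finset.sum_range_succ,
      Nat.choose_eq_zero_of_lt (by omega), Nat.choose_eq_zero_of_lt (by omega)]
    simp [fr]
  rw [show (∑ k ∈ range (m+3), ( ((m:ℝ)+2)^2 * (((m+2).choose k : ℕ) : ℝ)^3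
      - (7*(m:ℝ)^2+21*(m:ℝ)+16) * (((m+1).choose k : ℕ) : ℝ)^3
      - 8*((m:ℝ)+1)^2 * ((m.choose k : ℕ) : ℝ)^3 ))
      = ((m:ℝ)+2)^2 * (∑ k ∈ range (m+3), (((m+2).choose k : ℕ) : ℝ)^3)
        - (7*(m:ℝ)^2+21*(m:ℝ)+16) * (∑ k ∈ range (m+3), (((m+1).choose k : ℕ) : ℝ)^3)
        - 8*((m:ℝ)+1)^2 * (∑ k ∈ range (m+3), ((m.choose k : ℕ) : ℝ)^3) from by
    rw [Finset.mul_sum, Finset.mul_sum, Finset.mul_sum]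
    simp only [← Finset.sum_sub_distrib]] at hexpand
  rw [h1, h2, h3] at hexpand
  linarith

lemma r_bounds (m : ℕ) :
    ((m:ℝ)+2)/(8*((m:ℝ)+1)) ≤ fr m / fr (m+1) ∧
      fr m / fr (m+1) ≤ ((m:ℝ)+2)/(8*((m:ℝ)+1)) + 1/(4*((m:ℝ)+1)^2) := by
  induction m with
  | zero =>
    have h0 : fr 0 = 1 := by simp [fr]
    have h1 : fr 1 = 2 := by
      norm_num [fr, Finset.sum_range_succ]
    rw [h0, h1]
    norm_num
  | succ m ih =>
    obtain ⟨ihl, ihr⟩ := ih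
    have hF0 := fr_pos m
    have hF1 := fr_pos (m+1)
    have hF2 := fr_pos (m+2)
    have hrec := franel_rec m
    have hm1 : (0:ℝ) < (m:ℝ)+1 := by positivity
    have hm2 : (0:ℝ) < (m:ℝ)+2 := by positivity
    -- convert IH to linear form
    have hL : ((m:ℝ)+2) * fr (m+1) ≤ 8*((m:ℝ)+1) * fr m := by
      rw [div_le_div_iff₀ (by positivity) hF1] at ihl
      linarith
    have hU : 32*((m:ℝ)+1)^3 * fr m ≤ (4*((m:ℝ)+1)^2*((m:ℝ)+2) + 8*((m:ℝ)+1)) * fr (m+1) := by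
      rw [div_le_iff₀ hF1] at ihr
      have : ((m:ℝ)+2)/(8*((m:ℝ)+1)) + 1/(4*((m:ℝ)+1)^2)
          = (4*((m:ℝ)+1)^2*((m:ℝ)+2) + 8*((m:ℝ)+1)) / (32*((m:ℝ)+1)^3) := by
        field_simp
        ring
      rw [this] at ihr
      rw [div_mul_eq_mul_div, le_div_iff₀ (by positivity)] at ihr
      nlinarith [ihr]
    constructor
    · -- lower bound: (m+3)/(8(m+2)) ≤ fr(m+1)/fr(m+2)
      rw [div_le_div_iff₀ (by positivity) hF2]
      push_cast
      -- goal: (m+3) * fr (m+2) ≤ 8*(m+2) * fr (m+1)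
      -- (m+2)^2 * that: use hrec and hU
      have key : ((m:ℝ)+3) * (((m:ℝ)+2)^2 * fr (m+2)) ≤ 8*((m:ℝ)+2) * (((m:ℝ)+2)^2 * fr (m+1)) := by
        rw [hrec]
        nlinarith [mul_le_mul_of_nonneg_left hU (by positivity : (0:ℝ) ≤ ((m:ℝ)+3)/(4*((m:ℝ)+1))),
          mul_pos hm1 hF1]
      nlinarith [key, mul_pos (mul_pos hm2 hm2) hF2]
    · -- upper bound
      rw [div_le_iff₀ hF2]
      push_cast
      have hup : ((m:ℝ)+1+2)/(8*((m:ℝ)+1+1)) + 1/(4*((m:ℝ)+1+1)^2)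
          = ((m:ℝ)^2+5*(m:ℝ)+8) / (8*((m:ℝ)+2)^2) := by
        field_simp
        ring
      rw [hup]
      rw [div_mul_eq_mul_div, le_div_iff₀ (by positivity)]
      -- goal: fr(m+1) * (8*(m+2)^2) ≤ (m^2+5m+8) * fr (m+2) ... times (m+2)^2
      have key : 8*((m:ℝ)+2)^4 * fr (m+1) ≤ ((m:ℝ)^2+5*(m:ℝ)+8) * (((m:ℝ)+2)^2 * fr (m+2)) := by
        rw [hrec]
        nlinarith [mul_le_mul_of_nonneg_left hL
          (by positivity : (0:ℝ) ≤ ((m:ℝ)^2+5*(m:ℝ)+8)*((m:ℝ)+1)),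
          mul_pos hm1 hF1]
      nlinarith [key]

noncomputable def EE (n : ℕ) : ℝ :=
  (((∑ k ∈ Finset.range (n + 1), (k : ℝ) * (k - 1) * ((n.choose k : ℕ) : ℝ) ^ 3) /
      (∑ k ∈ Finset.range (n + 1), ((n.choose k : ℕ) : ℝ) ^ 3)) +
    ((∑ k ∈ Finset.range (n + 1), (k : ℝ) * ((n.choose k : ℕ) : ℝ) ^ 3) /
      (∑ k ∈ Finset.range (n + 1), ((n.choose k : ℕ) : ℝ) ^ 3)) -
    ((∑ k ∈ Finset.range (n + 1), (k : ℝ) * ((n.choose k : ℕ) : ℝ) ^ 3) /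
      (∑ k ∈ Finset.range (n + 1), ((n.choose k : ℕ) : ℝ) ^ 3)) ^ 2) / (n : ℝ)

lemma EE_eq (m : ℕ) :
    EE (m+1) = 2/3*((m:ℝ)+1)*(fr m / fr (m+1)) - ((m:ℝ)+1)/12 := by
  have hF : fr (m+1) ≠ 0 := ne_of_gt (fr_pos (m+1))
  have hfr : ∑ k ∈ Finset.range (m+2), (((m+1).choose k : ℕ) : ℝ) ^ 3 = fr (m+1) := rfl
  have hW : ∑ k ∈ Finset.range (m+2), (k : ℝ) * ((k:ℝ) - 1) * (((m+1).choose k : ℕ) : ℝ) ^ 3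
      = (∑ k ∈ Finset.range (m+2), (k : ℝ)^2 * (((m+1).choose k : ℕ) : ℝ) ^ 3)
        - (∑ k ∈ Finset.range (m+2), (k : ℝ) * (((m+1).choose k : ℕ) : ℝ) ^ 3) := by
    rw [← Finset.sum_sub_distrib]
    exact Finset.sum_congr rfl (fun k _ => by ring)
  have hS1 := S1_eq (m+1)
  have hS2 := S2_eq m
  show (((∑ k ∈ Finset.range (m+2), (k : ℝ) * ((k:ℝ) - 1) * (((m+1).choose k : ℕ) : ℝ) ^ 3) / fr (m+1)) +
    ((∑ k ∈ Finset.range (m+2), (k : ℝ) * (((m+1).choose k : ℕ) : ℝ) ^ 3) / fr (m+1)) -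
    ((∑ k ∈ Finset.range (m+2), (k : ℝ) * (((m+1).choose k : ℕ) : ℝ) ^ 3) / fr (m+1)) ^ 2)
      / (((m+1:ℕ) : ℝ)) = 2/3*((m:ℝ)+1)*(fr m / fr (m+1)) - ((m:ℝ)+1)/12
  rw [hW]
  rw [show (∑ k ∈ Finset.range (m+1+1), (k : ℝ) * (((m+1).choose k : ℕ) : ℝ) ^ 3)
      = ((m+1:ℕ) : ℝ)/2 * fr (m+1) from hS1]
  rw [hS2]
  push_cast
  field_simp
  ring

lemma EE_bounds (m : ℕ) :
    1/12 ≤ EE (m+1) ∧ EE (m+1) ≤ 1/12 + 1/6 * (1/(((m+1:ℕ)):ℝ)) := by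
  obtain ⟨hl, hr⟩ := r_bounds m
  have hm1 : (0:ℝ) < (m:ℝ)+1 := by positivity
  have heq := EE_eq m
  have hcl : 2/3*((m:ℝ)+1) * (((m:ℝ)+2)/(8*((m:ℝ)+1))) = ((m:ℝ)+2)/12 := by
    field_simp; ring
  have hcu : 2/3*((m:ℝ)+1) * (((m:ℝ)+2)/(8*((m:ℝ)+1)) + 1/(4*((m:ℝ)+1)^2))
      = ((m:ℝ)+2)/12 + 1/(6*((m:ℝ)+1)) := by
    field_simp; ring
  have hmono_l := mul_le_mul_of_nonneg_left hl (by positivity : (0:ℝ) ≤ 2/3*((m:ℝ)+1))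
  have hmono_u := mul_le_mul_of_nonneg_left hr (by positivity : (0:ℝ) ≤ 2/3*((m:ℝ)+1))
  rw [hcl] at hmono_l
  rw [hcu] at hmono_u
  have hcast : (((m+1:ℕ)):ℝ) = (m:ℝ)+1 := by push_cast; ring
  constructor
  · rw [heq]; linarith
  · rw [heq, hcast]
    have : 1/6 * (1/((m:ℝ)+1)) = 1/(6*((m:ℝ)+1)) := by
      field_simp
    rw [this]
    linarith

theorem franel_variance_limit' :
    Filter.Tendsto EE Filter.atTop (nhds (1 / 12)) := by
  have hupper : Filter.Tendsto (fun n : ℕ => 1/12 + 1/6 * (1/(n:ℝ)))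
      Filter.atTop (nhds (1/12)) := by
    have h0 : Filter.Tendsto (fun n : ℕ => 1/(n:ℝ)) Filter.atTop (nhds 0) :=
      tendsto_one_div_atTop_nhds_zero_nat
    have := (tendsto_const_nhds (x := (1/12 : ℝ)) (f := Filter.atTop (α := ℕ))).add
      ((tendsto_const_nhds (x := (1/6:ℝ)) (f := Filter.atTop (α := ℕ))).mul h0)
    simpa using this
  refine tendsto_of_tendsto_of_tendsto_of_le_of_le'
    (tendsto_const_nhds) hupper ?_ ?_
  · filter_upwards [Filter.eventually_ge_atTop 1] with n hn
    obtain ⟨m, rfl⟩ := Nat.exists_eq_add_of_le hn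
    rw [Nat.add_comm]
    exact (EE_bounds m).1
  · filter_upwards [Filter.eventually_ge_atTop 1] with n hn
    obtain ⟨m, rfl⟩ := Nat.exists_eq_add_of_le hn
    rw [Nat.add_comm]
    exact (EE_bounds m).2

theorem franel_variance_limit :
    Filter.Tendsto
      (fun n : ℕ =>
        (((∑ k ∈ Finset.range (n + 1), (k : ℝ) * (k - 1) * ((n.choose k : ℕ) : ℝ) ^ 3) /
            (∑ k ∈ Finset.range (n + 1), ((n.choose k : ℕ) : ℝ) ^ 3)) +
          ((∑ k ∈ Finset.range (n + 1), (k : ℝ) * ((n.choose k : ℕ) : ℝ) ^ 3) /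
            (∑ k ∈ Finset.range (n + 1), ((n.choose k : ℕ) : ℝ) ^ 3)) -
          ((∑ k ∈ Finset.range (n + 1), (k : ℝ) * ((n.choose k : ℕ) : ℝ) ^ 3) /
            (∑ k ∈ Finset.range (n + 1), ((n.choose k : ℕ) : ℝ) ^ 3)) ^ 2) / (n : ℝ))
      Filter.atTop (nhds (1 / 12)) := by
  exact franel_variance_limit'
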